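/- Convergence of PGD to a critical point: choose z⁽⁰⁾ with ‖x − D z⁽⁰⁾‖₂ ≤ 1, set S = supp(z⁽⁰⁾), and let τ > 1 and s > max{2|S|, 2(1+λ|S|)/(λτ)}. If D_S has full column rank with σ_min(D_S) > 0, then the PGD sequence {z⁽ᵗ⁾}_t converges to some ẑ ∈ ℝⁿ satisfying (Dᵀ(Dẑ − x))_j = 0 for every j ∈ supp(ẑ), i.e., ẑ is a critical point of L (the gradient of the squared-loss part of L vanishes on the support of ẑ). -/

import Mathlib

open scoped BigOperators

noncomputable def l2norm {m : ℕ} (v : Fin m → ℝ) : ℝ := Real.sqrt (∑ i, (v i)^2)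

noncomputable def supp {n : ℕ} (z : Fin n → ℝ) : Finset (Fin n) := Finset.univ.filter (fun j => z j ≠ 0)

noncomputable def l0norm {n : ℕ} (z : Fin n → ℝ) : ℕ := (supp z).card

noncomputable def hardThresh {n : ℕ} (θ : ℝ) (u : Fin n → ℝ) : Fin n → ℝ :=
  fun j => if |u j| < θ then 0 else u j

noncomputable def Lobj {d n : ℕ} (D : Matrix (Fin d) (Fin n) ℝ) (x : Fin d → ℝ) (lam : ℝ)
    (z : Fin n → ℝ) : ℝ := (l2norm (x - D.mulVec z))^2 + lam * (l0norm z : ℝ)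

noncomputable def pgdSeq {d n : ℕ} (D : Matrix (Fin d) (Fin n) ℝ) (x : Fin d → ℝ)
    (lam τ s : ℝ) (z0 : Fin n → ℝ) : ℕ → (Fin n → ℝ)
  | 0 => z0
  | (t+1) =>
      hardThresh (Real.sqrt (2*lam/(τ*s)))
        (fun j => pgdSeq D x lam τ s z0 t j
          - (2/(τ*s)) * (D.transpose.mulVec (D.mulVec (pgdSeq D x lam τ s z0 t) - x)) j)

noncomputable def sigmaMinCols {d n : ℕ} (D : Matrix (Fin d) (Fin n) ℝ) (S : Finset (Fin n)) : ℝ :=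
  sInf {t | ∃ y : Fin n → ℝ, (∀ j ∉ S, y j = 0) ∧ l2norm y = 1 ∧ t = l2norm (D.mulVec y)}

noncomputable def sigmaMaxCols {d n : ℕ} (D : Matrix (Fin d) (Fin n) ℝ) (S : Finset (Fin n)) : ℝ :=
  sSup {t | ∃ y : Fin n → ℝ, (∀ j ∉ S, y j = 0) ∧ l2norm y = 1 ∧ t = l2norm (D.mulVec y)}

noncomputable def sigmaMax {d n : ℕ} (D : Matrix (Fin d) (Fin n) ℝ) : ℝ :=
  sSup {t | ∃ y : Fin n → ℝ, l2norm y = 1 ∧ t = l2norm (D.mulVec y)}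

def admissibleSubgrad {n : ℕ} (lam b : ℝ) (z r : Fin n → ℝ) : Prop :=
  (∀ j, z j ≠ 0 → r j = 0) ∧ (∀ j, z j = 0 → -(lam/b) ≤ r j ∧ r j ≤ lam/b)

noncomputable def frobNorm {a b : ℕ} (M : Matrix (Fin a) (Fin b) ℝ) : ℝ :=
  Real.sqrt (∑ i, ∑ j, (M i j)^2)


section myaux

noncomputable def N2 {m : ℕ} (v : Fin m → ℝ) : ℝ := ∑ i, (v i)^2

lemma N2_nonneg {m : ℕ} (v : Fin m → ℝ) : 0 ≤ N2 v :=
  Finset.sum_nonneg fun i _ => sq_nonneg _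

lemma l2norm_sq {m : ℕ} (v : Fin m → ℝ) : (l2norm v)^2 = N2 v :=
  Real.sq_sqrt (N2_nonneg v)

lemma l2norm_eq {m : ℕ} (v : Fin m → ℝ) : l2norm v = Real.sqrt (N2 v) := rfl

lemma N2_le_one {m : ℕ} {v : Fin m → ℝ} (h : l2norm v ≤ 1) : N2 v ≤ 1 := by
  have h1 := l2norm_sq v
  have h0 : 0 ≤ l2norm v := Real.sqrt_nonneg _
  nlinarith

lemma sq_le_N2 {m : ℕ} (v : Fin m → ℝ) (i : Fin m) : (v i)^2 ≤ N2 v :=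
  Finset.single_le_sum (fun i _ => sq_nonneg (v i)) (Finset.mem_univ i)

lemma abs_le_sqrt_N2 {m : ℕ} (v : Fin m → ℝ) (i : Fin m) : |v i| ≤ Real.sqrt (N2 v) := by
  rw [← Real.sqrt_sq_eq_abs]
  exact Real.sqrt_le_sqrt (sq_le_N2 v i)

lemma l2norm_smul {m : ℕ} (c : ℝ) (v : Fin m → ℝ) :
    l2norm (fun i => c * v i) = |c| * l2norm v := by
  rw [l2norm, l2norm, ← Real.sqrt_sq_eq_abs, ← Real.sqrt_mul (sq_nonneg c), Finset.mul_sum]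
  congr 1; apply Finset.sum_congr rfl; intro i _; ring

section matrixlem
variable {d n : ℕ} (D : Matrix (Fin d) (Fin n) ℝ)

lemma col_sq_sum (hD : ∀ j, l2norm (fun i => D i j) ≤ 1) (j : Fin n) :
    ∑ i, (D i j)^2 ≤ 1 := N2_le_one (hD j)

lemma mulVec_apply (v : Fin n → ℝ) (i : Fin d) :
    D.mulVec v i = ∑ j, D i j * v j := by
  simp [Matrix.mulVec, dotProduct]

lemma transpose_mulVec_apply (w : Fin d → ℝ) (j : Fin n) :
    D.transpose.mulVec w j = ∑ i, D i j * w i := by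
  simp [Matrix.mulVec, dotProduct, Matrix.transpose_apply]

lemma grad_coord_sq_le (hD : ∀ j, l2norm (fun i => D i j) ≤ 1) (w : Fin d → ℝ) (j : Fin n) :
    (D.transpose.mulVec w j)^2 ≤ N2 w := by
  rw [transpose_mulVec_apply]
  calc (∑ i, D i j * w i)^2 ≤ (∑ i, (D i j)^2) * (∑ i, (w i)^2) :=
        Finset.sum_mul_sq_le_sq_mul_sq _ _ _
    _ ≤ 1 * N2 w := by
        apply mul_le_mul_of_nonneg_right (col_sq_sum D hD j) (N2_nonneg w)
    _ = N2 w := one_mul _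

-- adjoint identity
lemma adjoint_dot (w : Fin d → ℝ) (v : Fin n → ℝ) :
    ∑ j, D.transpose.mulVec w j * v j = ∑ i, w i * D.mulVec v i := by
  simp only [transpose_mulVec_apply, mulVec_apply, Finset.sum_mul, Finset.mul_sum]
  rw [Finset.sum_comm]
  apply Finset.sum_congr rfl; intro i _
  apply Finset.sum_congr rfl; intro j _
  rw [Matrix.transpose_apply]; ring

lemma N2_Dv_le_card (hD : ∀ j, l2norm (fun i => D i j) ≤ 1) (S : Finset (Fin n))
    (v : Fin n → ℝ) (hv : ∀ j ∉ S, v j = 0) :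
    N2 (D.mulVec v) ≤ (S.card : ℝ) * N2 v := by
  have hrestr : ∀ i, D.mulVec v i = ∑ j ∈ S, D i j * v j := by
    intro i
    rw [mulVec_apply]
    symm
    apply Finset.sum_subset S.subset_univ
    intro j _ hj; rw [hv j hj, mul_zero]
  have key : ∀ i, (D.mulVec v i)^2 ≤ (∑ j ∈ S, (D i j)^2) * N2 v := by
    intro i
    rw [hrestr i]
    calc (∑ j ∈ S, D i j * v j)^2 ≤ (∑ j ∈ S, (D i j)^2) * (∑ j ∈ S, (v j)^2) :=
          Finset.sum_mul_sq_le_sq_mul_sq _ _ _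
      _ ≤ (∑ j ∈ S, (D i j)^2) * N2 v := by
          apply mul_le_mul_of_nonneg_left _ (Finset.sum_nonneg fun _ _ => sq_nonneg _)
          apply Finset.sum_le_sum_of_subset_of_nonneg S.subset_univ
          intro j _ _; exact sq_nonneg _
  calc N2 (D.mulVec v) ≤ ∑ i, (∑ j ∈ S, (D i j)^2) * N2 v :=
        Finset.sum_le_sum fun i _ => key i
    _ = (∑ j ∈ S, ∑ i, (D i j)^2) * N2 v := by
        rw [← Finset.sum_mul, Finset.sum_comm]
    _ ≤ (S.card : ℝ) * N2 v := by
        apply mul_le_mul_of_nonneg_right _ (N2_nonneg v)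
        calc ∑ j ∈ S, ∑ i, (D i j)^2 ≤ ∑ j ∈ S, (1:ℝ) :=
              Finset.sum_le_sum fun j _ => col_sq_sum D hD j
          _ = S.card := by simp

end matrixlem

section sigmalem
variable {d n : ℕ} (D : Matrix (Fin d) (Fin n) ℝ)

lemma sigmaSet_bddBelow (S : Finset (Fin n)) :
    BddBelow {t | ∃ y : Fin n → ℝ, (∀ j ∉ S, y j = 0) ∧ l2norm y = 1 ∧ t = l2norm (D.mulVec y)} := by
  refine ⟨0, ?_⟩
  rintro t ⟨y, -, -, rfl⟩
  exact Real.sqrt_nonneg _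

lemma sigmaMin_le (S : Finset (Fin n)) (y : Fin n → ℝ) (hy : ∀ j ∉ S, y j = 0)
    (hy1 : l2norm y = 1) : sigmaMinCols D S ≤ l2norm (D.mulVec y) :=
  csInf_le (sigmaSet_bddBelow D S) ⟨y, hy, hy1, rfl⟩

lemma sigmaMin_nonempty (S : Finset (Fin n)) (hσ : 0 < sigmaMinCols D S) : S.Nonempty := by
  by_contra h
  rw [Finset.not_nonempty_iff_eq_empty] at h
  subst h
  have : {t | ∃ y : Fin n → ℝ, (∀ j ∉ (∅ : Finset (Fin n)), y j = 0) ∧ l2norm y = 1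
      ∧ t = l2norm (D.mulVec y)} = ∅ := by
    ext t
    simp only [Set.mem_setOf_eq, Set.mem_empty_iff_false, iff_false]
    rintro ⟨y, hy, hy1, -⟩
    have hy0 : y = 0 := funext fun j => hy j (Finset.notMem_empty j)
    rw [hy0] at hy1
    simp [l2norm] at hy1
  rw [sigmaMinCols, this, Real.sInf_empty] at hσ
  exact lt_irrefl 0 hσ

lemma sigmaMin_le_one (S : Finset (Fin n)) (hD : ∀ j, l2norm (fun i => D i j) ≤ 1)
    (hne : S.Nonempty) : sigmaMinCols D S ≤ 1 := by
  obtain ⟨j0, hj0⟩ := hne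
  set e : Fin n → ℝ := fun k => if k = j0 then 1 else 0 with he
  have h1 : l2norm e = 1 := by
    rw [l2norm_eq, N2]
    have : ∑ i, (e i)^2 = 1 := by
      rw [he]
      rw [Finset.sum_eq_single j0]
      · simp
      · intro b _ hb; simp [hb]
      · intro h; exact absurd (Finset.mem_univ j0) h
    rw [this, Real.sqrt_one]
  have h2 : ∀ k ∉ S, e k = 0 := by
    intro k hk
    rw [he]
    have : k ≠ j0 := fun hkj => absurd (hkj ▸ hj0) hk
    simp [this]
  have h3 : D.mulVec e = fun i => D i j0 := by
    funext i
    rw [mulVec_apply]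
    rw [Finset.sum_eq_single j0]
    · simp [he]
    · intro b _ hb; simp [he, hb]
    · intro h; exact absurd (Finset.mem_univ j0) h
  calc sigmaMinCols D S ≤ l2norm (D.mulVec e) := sigmaMin_le D S e h2 h1
    _ = l2norm (fun i => D i j0) := by rw [h3]
    _ ≤ 1 := hD j0

lemma sigmaMin_sq_le (S : Finset (Fin n)) (hσ : 0 < sigmaMinCols D S)
    (v : Fin n → ℝ) (hv : ∀ j ∉ S, v j = 0) :
    (sigmaMinCols D S)^2 * N2 v ≤ N2 (D.mulVec v) := by
  rcases eq_or_ne v 0 with hv0 | hv0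
  · subst hv0
    have : N2 (0 : Fin n → ℝ) = 0 := by simp [N2]
    rw [this, mul_zero]
    exact N2_nonneg _
  · have hN : 0 < N2 v := by
      rcases Function.ne_iff.mp hv0 with ⟨j, hj⟩
      have hj' : v j ≠ 0 := hj
      have : (0:ℝ) < (v j)^2 := by positivity
      exact lt_of_lt_of_le this (sq_le_N2 v j)
    have hl : 0 < l2norm v := by
      rw [l2norm_eq]; exact Real.sqrt_pos.mpr hN
    set c := (l2norm v)⁻¹ with hc
    have hcpos : 0 < c := inv_pos.mpr hl
    have hy1 : l2norm (fun i => c * v i) = 1 := by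
      rw [l2norm_smul, abs_of_pos hcpos, hc, inv_mul_cancel₀ (ne_of_gt hl)]
    have hy0 : ∀ j ∉ S, c * v j = 0 := fun j hj => by rw [hv j hj, mul_zero]
    have key := sigmaMin_le D S (fun i => c * v i) hy0 hy1
    have hDv : D.mulVec (fun i => c * v i) = fun i => c * D.mulVec v i := by
      funext i
      simp only [mulVec_apply, Finset.mul_sum]
      apply Finset.sum_congr rfl; intro j _; ring
    rw [hDv, l2norm_smul, abs_of_pos hcpos] at key
    -- key : σ ≤ c * l2norm (D.mulVec v)
    have hkey2 : sigmaMinCols D S * l2norm v ≤ l2norm (D.mulVec v) := by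
      rw [hc] at key
      have h2 := mul_le_mul_of_nonneg_right key (le_of_lt hl)
      rw [mul_assoc] at h2
      rw [mul_comm (l2norm (D.mulVec v)) (l2norm v), ← mul_assoc,
        inv_mul_cancel₀ (ne_of_gt hl), one_mul] at h2
      exact h2
    have hsq := mul_self_le_mul_self (by positivity) hkey2
    calc (sigmaMinCols D S)^2 * N2 v = (sigmaMinCols D S * l2norm v) * (sigmaMinCols D S * l2norm v) := by
          rw [← l2norm_sq]; ring
      _ ≤ l2norm (D.mulVec v) * l2norm (D.mulVec v) := hsq
      _ = N2 (D.mulVec v) := by rw [← l2norm_sq]; ring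

end sigmalem

section proxlem
variable {d n : ℕ}

lemma hardThresh_small {θ : ℝ} {w : Fin n → ℝ} {j : Fin n} (h : |w j| < θ) :
    hardThresh θ w j = 0 := if_pos h

lemma hardThresh_ne {θ : ℝ} {w : Fin n → ℝ} {j : Fin n} (h : hardThresh θ w j ≠ 0) :
    hardThresh θ w j = w j ∧ θ ≤ |w j| := by
  by_cases hc : |w j| < θ
  · exact absurd (hardThresh_small hc) h
  · exact ⟨if_neg hc, not_lt.mp hc⟩

lemma l0norm_eq_sum (z : Fin n → ℝ) :
    (l0norm z : ℝ) = ∑ j, (if z j ≠ 0 then (1:ℝ) else 0) := by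
  rw [l0norm, supp, Finset.card_filter]
  push_cast
  rfl

lemma prox_ineq (θ lam c : ℝ) (hθ : 0 < θ) (hc : 0 < c) (hlc : lam = c * θ^2)
    (u w : Fin n → ℝ) :
    lam * (l0norm (hardThresh θ w) : ℝ) + c * N2 (fun j => hardThresh θ w j - w j) ≤
      lam * (l0norm u : ℝ) + c * N2 (fun j => u j - w j) := by
  rw [l0norm_eq_sum, l0norm_eq_sum, N2, N2, Finset.mul_sum, Finset.mul_sum,
    Finset.mul_sum, Finset.mul_sum, ← Finset.sum_add_distrib, ← Finset.sum_add_distrib]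
  apply Finset.sum_le_sum
  intro j _
  by_cases hcase : |w j| < θ
  · have hval : hardThresh θ w j = 0 := hardThresh_small hcase
    rw [hval]
    rw [if_neg (by norm_num : ¬(0:ℝ) ≠ 0)]
    have hw2 : (w j)^2 ≤ θ^2 := by
      rw [← sq_abs]
      exact pow_le_pow_left₀ (abs_nonneg _) (le_of_lt hcase) 2
    by_cases hu : u j = 0
    · rw [if_neg (by simp [hu] : ¬u j ≠ 0), hu]
    · rw [if_pos hu]
      nlinarith [sq_nonneg (u j - w j)]
  · have hval : hardThresh θ w j = w j := if_neg hcase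
    have hne : w j ≠ 0 := fun h0 => hcase (by rw [h0, abs_zero]; exact hθ)
    rw [hval, if_pos hne]
    have hw2 : θ^2 ≤ (w j)^2 := by
      rw [← sq_abs (w j)]
      exact pow_le_pow_left₀ (le_of_lt hθ) (not_lt.mp hcase) 2
    by_cases hu : u j = 0
    · rw [if_neg (by simp [hu] : ¬u j ≠ 0), hu]
      nlinarith
    · rw [if_pos hu]
      nlinarith [sq_nonneg (u j - w j)]

end proxlem

section descentlem
variable {d n : ℕ} (D : Matrix (Fin d) (Fin n) ℝ) (x : Fin d → ℝ)

lemma f_expand (z δ : Fin n → ℝ) :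
    N2 (x - D.mulVec (fun j => z j + δ j)) =
      N2 (x - D.mulVec z) + 2 * (∑ j, D.transpose.mulVec (D.mulVec z - x) j * δ j)
        + N2 (D.mulVec δ) := by
  have hadd : ∀ i, D.mulVec (fun j => z j + δ j) i = D.mulVec z i + D.mulVec δ i := by
    intro i
    simp only [mulVec_apply, ← Finset.sum_add_distrib]
    apply Finset.sum_congr rfl; intro j _; ring
  have hadj := adjoint_dot D (D.mulVec z - x) δ
  rw [hadj]
  simp only [N2, Pi.sub_apply, hadd, Finset.mul_sum, ← Finset.sum_add_distrib]
  apply Finset.sum_congr rfl; intro i _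
  ring

/-- Master descent inequality for one PGD step. -/
lemma descent_step (lam τ s : ℝ) (hτs : 0 < τ * s) (hlam : 0 < lam)
    (z : Fin n → ℝ) :
    ∀ z' : Fin n → ℝ, z' = hardThresh (Real.sqrt (2*lam/(τ*s)))
        (fun j => z j - (2/(τ*s)) * (D.transpose.mulVec (D.mulVec z - x)) j) →
    Lobj D x lam z' + (τ*s/2) * N2 (fun j => z' j - z j) ≤
      Lobj D x lam z + N2 (D.mulVec (fun j => z' j - z j)) := by
  intro z' hz'
  set g : Fin n → ℝ := fun j => D.transpose.mulVec (D.mulVec z - x) j with hg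
  set w : Fin n → ℝ := fun j => z j - (2/(τ*s)) * g j with hw
  set θ := Real.sqrt (2*lam/(τ*s)) with hθdef
  have hθpos : 0 < θ := Real.sqrt_pos.mpr (by positivity)
  have hθsq : θ^2 = 2*lam/(τ*s) := Real.sq_sqrt (by positivity)
  have hlc : lam = (τ*s/2) * θ^2 := by
    rw [hθsq, div_mul_div_comm, eq_div_iff (mul_pos two_pos hτs).ne']; ring
  have hprox := prox_ineq θ lam (τ*s/2) hθpos (by positivity) hlc z w
  rw [← hz'] at hprox
  -- rewrite the N2 terms
  have hA : N2 (fun j => z' j - w j) =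
      N2 (fun j => z' j - z j) + (2/(τ*s)) * 2 * (∑ j, g j * (z' j - z j))
        + N2 (fun j => z j - w j) := by
    simp only [N2, hw, Finset.mul_sum, ← Finset.sum_add_distrib]
    apply Finset.sum_congr rfl; intro j _
    ring
  have hkey : (τ*s/2) * ((2/(τ*s)) * 2 * (∑ j, g j * (z' j - z j)))
      = 2 * (∑ j, g j * (z' j - z j)) := by
    rw [← mul_assoc]
    have : (τ*s/2) * ((2/(τ*s)) * 2) = 2 := by
      rw [← mul_assoc, div_mul_div_comm, div_mul_eq_mul_div, div_eq_iff (mul_pos two_pos hτs).ne']; ring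
    rw [this]
  rw [hA, mul_add, mul_add, hkey] at hprox
  have hprox2 : lam * (l0norm z' : ℝ) + (τ*s/2) * N2 (fun j => z' j - z j)
      + 2 * (∑ j, g j * (z' j - z j)) ≤ lam * (l0norm z : ℝ) := by
    linarith
  have hexp := f_expand D x z (fun j => z' j - z j)
  have hzz : (fun j => z j + (z' j - z j)) = z' := by funext j; ring
  rw [hzz] at hexp
  have hgsum : (∑ j, D.transpose.mulVec (D.mulVec z - x) j * (z' j - z j))
      = ∑ j, g j * (z' j - z j) := rfl
  rw [hgsum] at hexp
  simp only [Lobj, l2norm_sq]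
  linarith

end descentlem

section contractlem
variable {d n : ℕ} (D : Matrix (Fin d) (Fin n) ℝ)

lemma contract_step (hD : ∀ j, l2norm (fun i => D i j) ≤ 1)
    (S T : Finset (Fin n)) (hTS : T ⊆ S)
    (hσ : 0 < sigmaMinCols D S)
    (η2 : ℝ) (hη2 : 0 ≤ η2) (hηS : η2 * (S.card : ℝ) ≤ 1)
    (v w : Fin n → ℝ) (hvT : ∀ j ∉ T, v j = 0) (hw0 : ∀ j ∉ T, w j = 0)
    (hwT : ∀ j ∈ T, w j = v j - η2 * (D.transpose.mulVec (D.mulVec v)) j) :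
    N2 w ≤ (1 - η2 * (sigmaMinCols D S)^2) * N2 v := by
  set u : Fin n → ℝ := fun j => D.transpose.mulVec (D.mulVec v) j with hu
  have h1 : N2 w = ∑ j ∈ T, (w j)^2 := by
    rw [N2]
    symm
    apply Finset.sum_subset T.subset_univ
    intro j _ hj; rw [hw0 j hj]; ring
  have h2 : ∑ j ∈ T, (w j)^2 =
      ∑ j ∈ T, ((v j)^2 - 2 * η2 * (v j * u j) + η2^2 * (u j)^2) := by
    apply Finset.sum_congr rfl
    intro j hj; rw [hwT j hj]; ring
  have h3 : ∑ j ∈ T, ((v j)^2 - 2 * η2 * (v j * u j) + η2^2 * (u j)^2) =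
      (∑ j ∈ T, (v j)^2) - 2 * η2 * (∑ j ∈ T, v j * u j) + η2^2 * (∑ j ∈ T, (u j)^2) := by
    rw [Finset.mul_sum, Finset.mul_sum, Finset.sum_add_distrib, Finset.sum_sub_distrib]
  have hA : ∑ j ∈ T, (v j)^2 = N2 v := by
    rw [N2]
    apply Finset.sum_subset T.subset_univ
    intro j _ hj; rw [hvT j hj]; ring
  have hB : ∑ j ∈ T, v j * u j = N2 (D.mulVec v) := by
    have hB1 : ∑ j ∈ T, v j * u j = ∑ j, v j * u j := by
      apply Finset.sum_subset T.subset_univ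
      intro j _ hj; rw [hvT j hj]; ring
    have hB2 : ∑ j, u j * v j = ∑ i, D.mulVec v i * D.mulVec v i :=
      adjoint_dot D (D.mulVec v) v
    rw [hB1]
    calc ∑ j, v j * u j = ∑ j, u j * v j := by
          apply Finset.sum_congr rfl; intro j _; ring
      _ = ∑ i, D.mulVec v i * D.mulVec v i := hB2
      _ = N2 (D.mulVec v) := by
          rw [N2]; apply Finset.sum_congr rfl; intro i _; ring
  have hC : ∑ j ∈ T, (u j)^2 ≤ (T.card : ℝ) * N2 (D.mulVec v) := by
    have := Finset.sum_le_card_nsmul T (fun j => (u j)^2) (N2 (D.mulVec v))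
      (fun j _ => grad_coord_sq_le D hD (D.mulVec v) j)
    rwa [nsmul_eq_mul] at this
  have hTcard : (T.card : ℝ) ≤ (S.card : ℝ) := Nat.cast_le.mpr (Finset.card_le_card hTS)
  have hDvnn : 0 ≤ N2 (D.mulVec v) := N2_nonneg _
  have hσ2 : (sigmaMinCols D S)^2 * N2 v ≤ N2 (D.mulVec v) :=
    sigmaMin_sq_le D S hσ v (fun j hj => hvT j (fun hjT => hj (hTS hjT)))
  have e1 : (T.card:ℝ) * N2 (D.mulVec v) ≤ (S.card:ℝ) * N2 (D.mulVec v) :=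
    mul_le_mul_of_nonneg_right hTcard hDvnn
  have e2 : η2^2 * (∑ j ∈ T, (u j)^2) ≤ η2^2 * ((S.card:ℝ) * N2 (D.mulVec v)) :=
    mul_le_mul_of_nonneg_left (hC.trans e1) (sq_nonneg η2)
  have e3 : η2^2 * ((S.card:ℝ) * N2 (D.mulVec v))
      = η2 * ((η2 * (S.card:ℝ)) * N2 (D.mulVec v)) := by ring
  have e4 : (η2 * (S.card:ℝ)) * N2 (D.mulVec v) ≤ 1 * N2 (D.mulVec v) :=
    mul_le_mul_of_nonneg_right hηS hDvnn
  have e5 : η2 * ((η2 * (S.card:ℝ)) * N2 (D.mulVec v)) ≤ η2 * (1 * N2 (D.mulVec v)) :=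
    mul_le_mul_of_nonneg_left e4 hη2
  have e6 : η2 * ((sigmaMinCols D S)^2 * N2 v) ≤ η2 * N2 (D.mulVec v) :=
    mul_le_mul_of_nonneg_left hσ2 hη2
  rw [h1, h2, h3, hA, hB]
  nlinarith [e2, e6]

end contractlem

section morelem
variable {d n : ℕ} (D : Matrix (Fin d) (Fin n) ℝ)

lemma abs_lt_of_sq_lt' {a b : ℝ} (h : a^2 < b^2) (hb : 0 ≤ b) : |a| < b := by
  rw [← Real.sqrt_sq_eq_abs, ← Real.sqrt_sq hb]
  exact Real.sqrt_lt_sqrt (sq_nonneg a) h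

lemma sq_le_of_abs_le' {a b : ℝ} (h : b ≤ |a|) (hb : 0 ≤ b) : b^2 ≤ a^2 := by
  rw [← sq_abs a]
  exact pow_le_pow_left₀ hb h 2

lemma mem_supp_iff {z : Fin n → ℝ} {j : Fin n} : j ∈ supp z ↔ z j ≠ 0 := by
  simp [supp]

lemma N2_sub_comm {m : ℕ} (a b : Fin m → ℝ) : N2 (a - b) = N2 (b - a) := by
  simp only [N2, Pi.sub_apply]
  apply Finset.sum_congr rfl; intro i _; ring

lemma mulVec_sub_apply' (a b : Fin n → ℝ) (i : Fin d) :
    D.mulVec (fun k => a k - b k) i = D.mulVec a i - D.mulVec b i := by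
  simp only [mulVec_apply, ← Finset.sum_sub_distrib]
  apply Finset.sum_congr rfl; intro k _; ring

lemma grad_diff (x : Fin d → ℝ) (z z' : Fin n → ℝ) (j : Fin n) :
    D.transpose.mulVec (D.mulVec z' - x) j - D.transpose.mulVec (D.mulVec z - x) j
      = D.transpose.mulVec (D.mulVec (fun k => z' k - z k)) j := by
  simp only [transpose_mulVec_apply, Pi.sub_apply, mulVec_sub_apply',
    ← Finset.sum_sub_distrib]
  apply Finset.sum_congr rfl; intro i _; ring

lemma Lobj_nonneg (x : Fin d → ℝ) (lam : ℝ) (hlam : 0 ≤ lam) (z : Fin n → ℝ) :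
    0 ≤ Lobj D x lam z := by
  rw [Lobj]
  have h1 : 0 ≤ lam * (l0norm z : ℝ) := by positivity
  nlinarith [sq_nonneg (l2norm (x - D.mulVec z))]

lemma Lobj_eq (x : Fin d → ℝ) (lam : ℝ) (z : Fin n → ℝ) :
    Lobj D x lam z = N2 (x - D.mulVec z) + lam * (l0norm z : ℝ) := by
  rw [Lobj, l2norm_sq]

lemma l0_le_card_supp {z : Fin n → ℝ} {S : Finset (Fin n)} (h : ∀ j ∉ S, z j = 0) :
    (l0norm z : ℝ) ≤ S.card := by
  have : supp z ⊆ S := by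
    intro j hj
    rw [mem_supp_iff] at hj
    by_contra hjS
    exact hj (h j hjS)
  exact_mod_cast Finset.card_le_card this

lemma lam_l0_le {lam : ℝ} (hlam : 0 ≤ lam) {z : Fin n → ℝ} {S : Finset (Fin n)}
    (h : ∀ j ∉ S, z j = 0) : lam * (l0norm z : ℝ) ≤ lam * S.card :=
  mul_le_mul_of_nonneg_left (l0_le_card_supp h) hlam

end morelem

end myaux

set_option maxHeartbeats 2000000 in
theorem stmt5 {d n : ℕ} (D : Matrix (Fin d) (Fin n) ℝ) (x : Fin d → ℝ)
    (lam τ s : ℝ) (z0 : Fin n → ℝ)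
    (hx : l2norm x ≤ 1) (hD : ∀ j, l2norm (fun i => D i j) ≤ 1)
    (hlam : 0 < lam) (hτ : 1 < τ)
    (hz0 : l2norm (x - D.mulVec z0) ≤ 1)
    (hs : s > max (2 * ((supp z0).card : ℝ))
                  (2 * (1 + lam * ((supp z0).card : ℝ)) / (lam * τ)))
    (hσ : 0 < sigmaMinCols D (supp z0)) :
    ∃ zhat : Fin n → ℝ,
      Filter.Tendsto (pgdSeq D x lam τ s z0) Filter.atTop (nhds zhat) ∧
      ∀ j ∈ supp zhat, (D.transpose.mulVec (D.mulVec zhat - x)) j = 0 := by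
  classical
  set S := supp z0 with hSdef
  set σ := sigmaMinCols D S with hσdef
  have hSne : S.Nonempty := sigmaMin_nonempty D S hσ
  have hcard1 : (1:ℝ) ≤ (S.card : ℝ) := by
    have := Finset.card_pos.mpr hSne
    exact_mod_cast this
  have hτpos : (0:ℝ) < τ := lt_trans one_pos hτ
  have hlampos := hlam
  have hs1 : 2 * (S.card : ℝ) < s := lt_of_le_of_lt (le_max_left _ _) hs
  have hs2 : 2 * (1 + lam * (S.card:ℝ)) / (lam * τ) < s := lt_of_le_of_lt (le_max_right _ _) hs
  have hspos : 0 < s := lt_of_le_of_lt (by positivity) hs1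
  have hτs : 0 < τ * s := mul_pos hτpos hspos
  have hlts : 2 * (1 + lam * (S.card:ℝ)) < lam * (τ * s) := by
    rw [div_lt_iff₀ (by positivity)] at hs2
    nlinarith
  have hts2 : 2 < τ * s := by nlinarith
  set η2 : ℝ := 2/(τ*s) with hη2def
  have hη2pos : 0 < η2 := by positivity
  have hη2le1 : η2 ≤ 1 := by
    rw [hη2def, div_le_one hτs]; linarith
  set θ : ℝ := Real.sqrt (2*lam/(τ*s)) with hθdef
  have hθpos : 0 < θ := Real.sqrt_pos.mpr (by positivity)
  have hθsq : θ^2 = 2*lam/(τ*s) := Real.sq_sqrt (by positivity)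
  set zs := pgdSeq D x lam τ s z0 with hzsdef
  have hstep : ∀ t, zs (t+1) = hardThresh θ
      (fun j => zs t j - η2 * (D.transpose.mulVec (D.mulVec (zs t) - x)) j) := fun t => rfl
  set L0 : ℝ := 1 + lam * (S.card : ℝ) with hL0def
  -- invariant pieces
  have hout : ∀ t, (∀ j ∉ S, zs t j = 0) → Lobj D x lam (zs t) ≤ L0 →
      (∀ j ∉ S, zs (t+1) j = 0) := by
    intro t hsupp hL j hj
    rw [hstep t]
    apply hardThresh_small
    have hz : zs t j = 0 := hsupp j hj
    have hres : N2 (x - D.mulVec (zs t)) ≤ L0 := by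
      have := Lobj_eq D x lam (zs t)
      have h1 : 0 ≤ lam * (l0norm (zs t) : ℝ) := by positivity
      linarith
    have hg2 : (D.transpose.mulVec (D.mulVec (zs t) - x) j)^2 ≤ L0 := by
      have h1 := grad_coord_sq_le D hD (D.mulVec (zs t) - x) j
      have h2 : N2 (D.mulVec (zs t) - x) = N2 (x - D.mulVec (zs t)) :=
        N2_sub_comm _ _
      linarith
    have hval : (zs t j - η2 * D.transpose.mulVec (D.mulVec (zs t) - x) j)^2
        = η2^2 * (D.transpose.mulVec (D.mulVec (zs t) - x) j)^2 := by
      rw [hz]; ring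
    apply abs_lt_of_sq_lt' _ hθpos.le
    rw [hval, hθsq]
    have hL0pos : 0 < L0 := by rw [hL0def]; positivity
    calc η2^2 * (D.transpose.mulVec (D.mulVec (zs t) - x) j)^2
        ≤ η2^2 * L0 := mul_le_mul_of_nonneg_left hg2 (sq_nonneg η2)
      _ < 2*lam/(τ*s) := by
          rw [hη2def]
          rw [div_pow, lt_div_iff₀ hτs, div_mul_eq_mul_div, div_mul_eq_mul_div,
            div_lt_iff₀ (by positivity : (0:ℝ) < (τ*s)^2)]
          ring_nf
          nlinarith [sq_nonneg (τ*s), hτs, hL0pos]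
  set ε : ℝ := τ*s/2 - (S.card : ℝ) with hεdef
  have hεpos : 0 < ε := by
    rw [hεdef]
    nlinarith
  have hdec0 : ∀ t, (∀ j ∉ S, zs t j = 0) → (∀ j ∉ S, zs (t+1) j = 0) →
      Lobj D x lam (zs (t+1)) + ε * N2 (fun j => zs (t+1) j - zs t j) ≤ Lobj D x lam (zs t) := by
    intro t h1 h2
    have hdesc := descent_step D x lam τ s hτs hlam (zs t) (zs (t+1)) (hstep t)
    have hδ : ∀ j ∉ S, (zs (t+1) j - zs t j) = 0 := by
      intro j hj; rw [h1 j hj, h2 j hj, sub_zero]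
    have hDδ := N2_Dv_le_card D hD S (fun j => zs (t+1) j - zs t j) hδ
    have hN2nn := N2_nonneg (fun j => zs (t+1) j - zs t j)
    rw [hεdef]
    linarith
  have hinv : ∀ t, (∀ j ∉ S, zs t j = 0) ∧ Lobj D x lam (zs t) ≤ L0 := by
    intro t
    induction t with
    | zero =>
      constructor
      · intro j hj
        by_contra h
        exact hj (mem_supp_iff.mpr h)
      · rw [Lobj_eq]
        have h1 : N2 (x - D.mulVec z0) ≤ 1 := N2_le_one hz0
        have h2 : lam * (l0norm z0 : ℝ) = lam * (S.card : ℝ) := by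
          rw [hSdef]; rfl
        rw [hL0def]
        have : (zs 0) = z0 := rfl
        rw [this]
        linarith [h2.le]
    | succ t ih =>
      obtain ⟨ih1, ih2⟩ := ih
      have h2 := hout t ih1 ih2
      have h3 := hdec0 t ih1 h2
      have hN2nn := N2_nonneg (fun j => zs (t+1) j - zs t j)
      exact ⟨h2, by nlinarith⟩
  have hdec : ∀ t, Lobj D x lam (zs (t+1)) + ε * N2 (fun j => zs (t+1) j - zs t j)
      ≤ Lobj D x lam (zs t) :=
    fun t => hdec0 t (hinv t).1 (hout t (hinv t).1 (hinv t).2)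
  -- summability of the decrements
  have hsumle : ∀ T : ℕ, ∑ t ∈ Finset.range T, ε * N2 (fun j => zs (t+1) j - zs t j)
      + Lobj D x lam (zs T) ≤ Lobj D x lam (zs 0) := by
    intro T
    induction T with
    | zero => simp
    | succ T ih =>
      rw [Finset.sum_range_succ]
      linarith [hdec T]
  have hsummable : Summable (fun t => ε * N2 (fun j => zs (t+1) j - zs t j)) := by
    apply summable_of_sum_range_le (c := Lobj D x lam (zs 0))
    · intro t
      have := N2_nonneg (fun j => zs (t+1) j - zs t j)
      positivity
    · intro T
      have := Lobj_nonneg D x lam hlam.le (zs T)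
      linarith [hsumle T]
  have htend0 : Filter.Tendsto (fun t => ε * N2 (fun j => zs (t+1) j - zs t j))
      Filter.atTop (nhds 0) := hsummable.tendsto_atTop_zero
  have hev : ∀ᶠ t in Filter.atTop, N2 (fun j => zs (t+1) j - zs t j) < θ^2 := by
    have h1 : ∀ᶠ t in Filter.atTop,
        ε * N2 (fun j => zs (t+1) j - zs t j) < ε * θ^2 :=
      htend0.eventually (gt_mem_nhds (by positivity))
    filter_upwards [h1] with t ht
    exact lt_of_mul_lt_mul_left ht hεpos.le
  obtain ⟨t1, ht1⟩ := Filter.eventually_atTop.mp hev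
  set t0 := max t1 1 with ht0def
  have ht01 : 1 ≤ t0 := le_max_right _ _
  have hsmall : ∀ t ≥ t0, N2 (fun j => zs (t+1) j - zs t j) < θ^2 :=
    fun t ht => ht1 t (le_trans (le_max_left _ _) ht)
  -- nonzero entries of iterates (t ≥ 1) are at least θ in absolute value
  have hbig : ∀ t, ∀ j, zs (t+1) j ≠ 0 → θ ≤ |zs (t+1) j| := by
    intro t j hj
    rw [hstep t] at hj ⊢
    obtain ⟨h1, h2⟩ := hardThresh_ne hj
    rw [h1]; exact h2
  -- single-step support stability
  have hone : ∀ t ≥ t0, ∀ j, (zs (t+1) j = 0 ↔ zs t j = 0) := by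
    intro t ht j
    obtain ⟨t', rfl⟩ : ∃ t', t = t' + 1 := by
      cases t with
      | zero => omega
      | succ t' => exact ⟨t', rfl⟩
    constructor
    · intro h10
      by_contra h00
      have hθle : θ ≤ |zs (t'+1) j| := hbig t' j h00
      have hsq : θ^2 ≤ (zs (t'+1) j)^2 := sq_le_of_abs_le' hθle hθpos.le
      have hsq2 : (zs (t'+1+1) j - zs (t'+1) j)^2 = (zs (t'+1) j)^2 := by
        rw [h10]; ring
      have := sq_le_N2 (fun j => zs (t'+1+1) j - zs (t'+1) j) j
      have hlt := hsmall (t'+1) ht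
      nlinarith
    · intro h00
      by_contra h10
      have hθle : θ ≤ |zs (t'+1+1) j| := hbig (t'+1) j h10
      have hsq : θ^2 ≤ (zs (t'+1+1) j)^2 := sq_le_of_abs_le' hθle hθpos.le
      have hsq2 : (zs (t'+1+1) j - zs (t'+1) j)^2 = (zs (t'+1+1) j)^2 := by
        rw [h00]; ring
      have := sq_le_N2 (fun j => zs (t'+1+1) j - zs (t'+1) j) j
      have hlt := hsmall (t'+1) ht
      nlinarith
  have hconst : ∀ t ≥ t0, ∀ j, (zs t j = 0 ↔ zs t0 j = 0) := by
    intro t ht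
    induction t, ht using Nat.le_induction with
    | base => intro j; rfl
    | succ t ht ih =>
      intro j
      rw [hone t ht j]
      exact ih j
  set T : Finset (Fin n) := supp (zs t0) with hTdef
  have hTS : T ⊆ S := by
    intro j hj
    rw [hTdef, mem_supp_iff] at hj
    by_contra hjS
    exact hj ((hinv t0).1 j hjS)
  have hT0 : ∀ j, j ∉ T → ∀ t ≥ t0, zs t j = 0 := by
    intro j hj t ht
    rw [hconst t ht j]
    by_contra h
    exact hj (mem_supp_iff.mpr h)
  have hTmem : ∀ j ∈ T, ∀ t ≥ t0, zs t j ≠ 0 := by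
    intro j hj t ht h
    rw [hconst t ht j] at h
    exact (mem_supp_iff.mp hj) h
  -- on the stable support the iteration is affine; contraction
  have hηS : η2 * (S.card : ℝ) ≤ 1 := by
    rw [hη2def, div_mul_eq_mul_div, div_le_one hτs]
    nlinarith
  set q2 : ℝ := 1 - η2 * σ^2 with hq2def
  have hσ1 : σ ≤ 1 := sigmaMin_le_one D S hD hSne
  have hq2nn : 0 ≤ q2 := by
    rw [hq2def]
    have : η2 * σ^2 ≤ 1 * 1 := by
      apply mul_le_mul hη2le1 _ (sq_nonneg σ) one_pos.le
      nlinarith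
    linarith
  have hq2lt : q2 < 1 := by
    rw [hq2def]
    have : 0 < η2 * σ^2 := by positivity
    linarith
  have hrec : ∀ t ≥ t0, ∀ j ∈ T,
      zs (t+1) j = zs t j - η2 * (D.transpose.mulVec (D.mulVec (zs t) - x)) j := by
    intro t ht j hj
    have hne : zs (t+1) j ≠ 0 := hTmem j hj (t+1) (le_trans ht (Nat.le_succ t))
    rw [hstep t] at hne ⊢
    exact (hardThresh_ne hne).1
  have hcontr : ∀ t ≥ t0, N2 (fun j => zs (t+2) j - zs (t+1) j)
      ≤ q2 * N2 (fun j => zs (t+1) j - zs t j) := by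
    intro t ht
    have ht' : t + 1 ≥ t0 := le_trans ht (Nat.le_succ t)
    apply contract_step D hD S T hTS hσ η2 hη2pos.le hηS
    · intro j hj
      rw [hT0 j hj (t+1) ht', hT0 j hj t ht, sub_zero]
    · intro j hj
      rw [hT0 j hj (t+2) (le_trans ht' (Nat.le_succ _)), hT0 j hj (t+1) ht', sub_zero]
    · intro j hj
      have e1 := hrec (t+1) ht' j hj
      have e2 := hrec t ht j hj
      have e3 := grad_diff D x (zs t) (zs (t+1)) j
      rw [e1, e2, ← e3]
      ring
  -- geometric decay
  have hgeo : ∀ k, N2 (fun j => zs (t0+k+1) j - zs (t0+k) j)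
      ≤ q2^k * N2 (fun j => zs (t0+1) j - zs t0 j) := by
    intro k
    induction k with
    | zero => simp
    | succ k ih =>
      have h1 := hcontr (t0+k) (Nat.le_add_right _ _)
      have h2 : t0 + (k+1) = (t0 + k) + 1 := by ring
      calc N2 (fun j => zs (t0+(k+1)+1) j - zs (t0+(k+1)) j)
          = N2 (fun j => zs ((t0+k)+2) j - zs ((t0+k)+1) j) := by
            congr 1
      _ ≤ q2 * N2 (fun j => zs (t0+k+1) j - zs (t0+k) j) := h1
      _ ≤ q2 * (q2^k * N2 (fun j => zs (t0+1) j - zs t0 j)) :=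
            mul_le_mul_of_nonneg_left ih hq2nn
      _ = q2^(k+1) * N2 (fun j => zs (t0+1) j - zs t0 j) := by ring
  -- Cauchy sequence via geometric bound
  set C : ℝ := Real.sqrt (N2 (fun j => zs (t0+1) j - zs t0 j)) with hCdef
  set r : ℝ := Real.sqrt q2 with hrdef
  have hr1 : r < 1 := by
    rw [hrdef, show (1:ℝ) = Real.sqrt 1 by rw [Real.sqrt_one]]
    exact Real.sqrt_lt_sqrt hq2nn hq2lt
  have hsqpow : ∀ k, Real.sqrt (q2^k) = r^k := by
    intro k
    rw [hrdef]
    induction k with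
    | zero => simp
    | succ k ih => rw [pow_succ, pow_succ, Real.sqrt_mul (pow_nonneg hq2nn k), ih]
  have hdistb : ∀ k, dist (zs (k + t0)) (zs ((k+1) + t0)) ≤ C * r^k := by
    intro k
    have hCrnn : 0 ≤ C * r^k := by
      rw [hCdef, hrdef]; positivity
    rw [dist_pi_le_iff hCrnn]
    intro j
    rw [Real.dist_eq]
    have h1 : |zs (k + t0) j - zs ((k+1) + t0) j|
        ≤ Real.sqrt (N2 (fun j => zs (t0+k+1) j - zs (t0+k) j)) := by
      have h2 := abs_le_sqrt_N2 (fun j => zs (t0+k+1) j - zs (t0+k) j) j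
      have h3 : zs (k + t0) j - zs ((k+1) + t0) j
          = -(zs (t0+k+1) j - zs (t0+k) j) := by
        have e1 : k + t0 = t0 + k := by ring
        have e2 : (k+1) + t0 = t0 + k + 1 := by ring
        rw [e1, e2]; ring
      rw [h3, abs_neg]
      exact h2
    have h4 : Real.sqrt (N2 (fun j => zs (t0+k+1) j - zs (t0+k) j))
        ≤ Real.sqrt (q2^k * N2 (fun j => zs (t0+1) j - zs t0 j)) :=
      Real.sqrt_le_sqrt (hgeo k)
    have h5 : Real.sqrt (q2^k * N2 (fun j => zs (t0+1) j - zs t0 j)) = C * r^k := by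
      rw [Real.sqrt_mul (pow_nonneg hq2nn k), hsqpow k, hCdef, mul_comm]
    calc |zs (k + t0) j - zs ((k+1) + t0) j| ≤ _ := h1
      _ ≤ _ := h4
      _ = C * r^k := h5
  have hcau : CauchySeq (fun k => zs (k + t0)) :=
    cauchySeq_of_le_geometric r C hr1 hdistb
  obtain ⟨zhat, hzhat⟩ := cauchySeq_tendsto_of_complete hcau
  have htendall : Filter.Tendsto zs Filter.atTop (nhds zhat) :=
    (Filter.tendsto_add_atTop_iff_nat t0).mp hzhat
  refine ⟨zhat, htendall, ?_⟩
  intro j hj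
  have hcoord : ∀ i : Fin n, Filter.Tendsto (fun t => zs t i) Filter.atTop (nhds (zhat i)) :=
    tendsto_pi_nhds.mp htendall
  have hjT : j ∈ T := by
    by_contra hjT
    have hev0 : ∀ᶠ t in Filter.atTop, zs t j = 0 :=
      Filter.eventually_atTop.mpr ⟨t0, fun t ht => hT0 j hjT t ht⟩
    have h0 : Filter.Tendsto (fun t => zs t j) Filter.atTop (nhds 0) :=
      Filter.Tendsto.congr' (Filter.EventuallyEq.symm hev0) tendsto_const_nhds
    have : zhat j = 0 := tendsto_nhds_unique (hcoord j) h0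
    rw [mem_supp_iff] at hj
    exact hj this
  -- the limit satisfies the fixed-point equation on T
  set φ : (Fin n → ℝ) → ℝ :=
    fun z => z j - η2 * (∑ i, D i j * ((∑ k, D i k * z k) - x i)) with hφdef
  have hφeq : ∀ z : Fin n → ℝ, φ z = z j - η2 * (D.transpose.mulVec (D.mulVec z - x)) j := by
    intro z
    simp only [hφdef, transpose_mulVec_apply, Pi.sub_apply, mulVec_apply, Matrix.transpose_apply]
  have hφcont : Continuous φ := by
    rw [hφdef]
    apply Continuous.sub (continuous_apply j)
    apply Continuous.mul continuous_const
    apply continuous_finset_sum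
    intro i _
    apply Continuous.mul continuous_const
    apply Continuous.sub _ continuous_const
    apply continuous_finset_sum
    intro k _
    exact Continuous.mul continuous_const (continuous_apply k)
  have hreceq : ∀ᶠ t in Filter.atTop, zs (t+1) j = φ (zs t) := by
    apply Filter.eventually_atTop.mpr
    refine ⟨t0, fun t ht => ?_⟩
    rw [hφeq]
    exact hrec t ht j hjT
  have htphi : Filter.Tendsto (fun t => φ (zs t)) Filter.atTop (nhds (φ zhat)) :=
    (hφcont.tendsto zhat).comp htendall
  have htshift : Filter.Tendsto (fun t => zs (t+1) j) Filter.atTop (nhds (zhat j)) :=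
    (hcoord j).comp (Filter.tendsto_add_atTop_nat 1)
  have htphi2 : Filter.Tendsto (fun t => zs (t+1) j) Filter.atTop (nhds (φ zhat)) :=
    Filter.Tendsto.congr' (Filter.EventuallyEq.symm hreceq) htphi
  have hfix : zhat j = φ zhat := tendsto_nhds_unique htshift htphi2
  rw [hφeq] at hfix
  have : η2 * (D.transpose.mulVec (D.mulVec zhat - x)) j = 0 := by linarith
  rcases mul_eq_zero.mp this with h | h
  · exact absurd h (ne_of_gt hη2pos)
  · exact h
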